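/- arXiv:1405.7569 — 2 statements merged into one kernel-verified Lean document; each statement's English description precedes it below -/
import Mathlib

section
/- (Lemma 1 of the paper.) Let k : V × V → ℝ be a bilinear form, φ_1,…,φ_M adjoint states with a(v,φ_i) = −c_i(v) for all v, u the solution of a(u,v)=ℓ(v), s_i = c_i(u), d ∈ ℝ^M data, σ ≥ 0, and β ∈ ℝ^M the solution of Σ_j (k(φ_j,φ_i) + σ δ_{ij}) β_j = d_i − s_i. Define ū* ∈ V by a(ū*,v) = ℓ(v) − Σ_j β_j k(φ_j,v) for all v, and s̄*_i = c_i(ū*). Then s̄* = d − σβ. -/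
/-- Lemma 1 of the paper: the mean outputs satisfy `s̄* = d - σ β`. -/
theorem stmt_2 {V : Type*} [AddCommGroup V] [Module ℝ V] [FiniteDimensional ℝ V]
    (a : V →ₗ[ℝ] V →ₗ[ℝ] ℝ)
    (ha₁ : ∀ w : V, (∀ v : V, a w v = 0) → w = 0)
    (ha₂ : ∀ w : V, (∀ v : V, a v w = 0) → w = 0)
    (k : V →ₗ[ℝ] V →ₗ[ℝ] ℝ)
    (ℓ : V →ₗ[ℝ] ℝ) (M : ℕ) (c : Fin M → (V →ₗ[ℝ] ℝ))
    (φ : Fin M → V) (hφ : ∀ (i : Fin M) (v : V), a v (φ i) = - c i v)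
    (u : V) (hu : ∀ v : V, a u v = ℓ v)
    (s d : Fin M → ℝ) (hs : ∀ i, s i = c i u)
    (σ : ℝ) (hσ : 0 ≤ σ)
    (hD : IsUnit (Matrix.of fun i j : Fin M =>
      k (φ j) (φ i) + σ * (if i = j then (1:ℝ) else 0)))
    (β : Fin M → ℝ)
    (hβ : ∀ i : Fin M,
      ∑ j : Fin M, (k (φ j) (φ i) + σ * (if i = j then (1:ℝ) else 0)) * β j = d i - s i)
    (uBar : V)
    (huBar : ∀ v : V, a uBar v = ℓ v - ∑ j : Fin M, β j * k (φ j) v)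
    (sBar : Fin M → ℝ) (hsBar : ∀ i, sBar i = c i uBar) :
    ∀ i : Fin M, sBar i = d i - σ * β i := by
  intro i
  have h1 : c i uBar = -(a uBar (φ i)) := by rw [hφ i uBar]; ring
  have hsplit : ∑ j : Fin M, (k (φ j) (φ i) + σ * (if i = j then (1:ℝ) else 0)) * β j
      = (∑ j : Fin M, k (φ j) (φ i) * β j) + σ * β i := by
    rw [Finset.sum_congr rfl (fun j _ => add_mul _ _ _), Finset.sum_add_distrib]
    congr 1
    rw [Finset.sum_congr rfl (fun j _ => by rw [mul_assoc]), ← Finset.mul_sum]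
    congr 1
    simp [Finset.sum_ite_eq, eq_comm]
  have hkey : ∑ j : Fin M, k (φ j) (φ i) * β j = d i - s i - σ * β i := by
    have := hβ i
    rw [hsplit] at this
    linarith
  rw [hsBar, h1, huBar, ← hu (φ i), hφ i u, ← hs]
  have : ∑ j : Fin M, β j * k (φ j) (φ i) = ∑ j : Fin M, k (φ j) (φ i) * β j :=
    Finset.sum_congr rfl fun j _ => mul_comm _ _
  rw [this, hkey]
  ring
end

section
/- (Theorem 2, KKT characterization.) Let k be a symmetric bilinear form on V and σ > 0. If (q°,u°,β°,p°,ϱ°) satisfies the first-order stationarity conditions: k(q°,v) − k(p°,v) = 0 for all v; a(v,p°) + Σ_i ϱ°_i c_i(v) = 0 for all v; σβ°_i = σϱ°_i; a(u°,v) + k(q°,v) = ℓ(v) for all v; and c_i(u°) + σβ°_i = d_i, then β° satisfies Σ_j (k(φ_i,φ_j) + σδ_{ij})β°_j = d_i − s_i, q° = Σ_i β°_i φ_i (assuming k nondegenerate), and u° equals the posterior mean ū* defined by a(ū*,v) = ℓ(v) − Σ_j β_j k(φ_j,v). -/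
/-- Theorem 2 (KKT characterization of the posterior mean state). -/
theorem stmt_4 {V : Type*} [AddCommGroup V] [Module ℝ V] [FiniteDimensional ℝ V]
    (a : V →ₗ[ℝ] V →ₗ[ℝ] ℝ)
    (ha₁ : ∀ w : V, (∀ v : V, a w v = 0) → w = 0)
    (ha₂ : ∀ w : V, (∀ v : V, a v w = 0) → w = 0)
    (k : V →ₗ[ℝ] V →ₗ[ℝ] ℝ)
    (hksymm : ∀ v w : V, k v w = k w v)
    (hknd : ∀ w : V, (∀ v : V, k w v = 0) → w = 0)
    (ℓ : V →ₗ[ℝ] ℝ) (M : ℕ) (c : Fin M → (V →ₗ[ℝ] ℝ))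
    (φ : Fin M → V) (hφ : ∀ (i : Fin M) (v : V), a v (φ i) = - c i v)
    (u : V) (hu : ∀ v : V, a u v = ℓ v)
    (s d : Fin M → ℝ) (hs : ∀ i, s i = c i u)
    (σ : ℝ) (hσ : 0 < σ)
    (hD : IsUnit (Matrix.of fun i j : Fin M =>
      k (φ i) (φ j) + σ * (if i = j then (1:ℝ) else 0)))
    (qo uo po : V) (βo ϱo : Fin M → ℝ)
    (h1 : ∀ v : V, k qo v - k po v = 0)
    (h2 : ∀ v : V, a v po + ∑ i : Fin M, ϱo i * c i v = 0)
    (h3 : ∀ i : Fin M, σ * βo i = σ * ϱo i)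
    (h4 : ∀ v : V, a uo v + k qo v = ℓ v)
    (h5 : ∀ i : Fin M, c i uo + σ * βo i = d i)
    (uBar : V)
    (huBar : ∀ v : V, a uBar v = ℓ v - ∑ j : Fin M, βo j * k (φ j) v) :
    (∀ i : Fin M,
      ∑ j : Fin M, (k (φ i) (φ j) + σ * (if i = j then (1:ℝ) else 0)) * βo j = d i - s i)
    ∧ qo = ∑ i : Fin M, βo i • φ i
    ∧ uo = uBar := by
  have hβϱ : ∀ i, βo i = ϱo i := fun i => mul_left_cancel₀ (ne_of_gt hσ) (h3 i)
  -- po = ∑ βo i • φ i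
  have hpo : po = ∑ i : Fin M, βo i • φ i := by
    refine sub_eq_zero.mp (ha₂ _ fun v => ?_)
    have hsum : a v (∑ i : Fin M, βo i • φ i) = - ∑ i : Fin M, ϱo i * c i v := by
      rw [map_sum, ← Finset.sum_neg_distrib]
      refine Finset.sum_congr rfl fun i _ => ?_
      rw [map_smul, smul_eq_mul, hφ, hβϱ]; ring
    rw [map_sub, hsum]
    have := h2 v; linarith
  -- qo = ∑ βo i • φ i
  have hqo : qo = ∑ i : Fin M, βo i • φ i := by
    refine sub_eq_zero.mp (hknd _ fun v => ?_)
    have : k qo v = k po v := by have := h1 v; linarith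
    rw [map_sub, LinearMap.sub_apply, this, hpo, sub_self]
  -- k qo v = ∑ j βo j * k (φ j) v
  have hkq : ∀ v : V, k qo v = ∑ j : Fin M, βo j * k (φ j) v := by
    intro v
    rw [hqo, map_sum, LinearMap.sum_apply]
    exact Finset.sum_congr rfl fun j _ => by rw [map_smul, LinearMap.smul_apply, smul_eq_mul]
  refine ⟨?_, hqo, ?_⟩
  · intro i
    have hsum : ∑ j : Fin M,
        (k (φ i) (φ j) + σ * (if i = j then (1:ℝ) else 0)) * βo j
        = k qo (φ i) + σ * βo i := by
      rw [hkq (φ i)]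
      have : ∀ j : Fin M,
          (k (φ i) (φ j) + σ * (if i = j then (1:ℝ) else 0)) * βo j
          = βo j * k (φ j) (φ i) + (if i = j then σ * βo j else 0) := by
        intro j
        rw [hksymm (φ j) (φ i)]
        by_cases h : i = j <;> simp [h] <;> ring
      rw [Finset.sum_congr rfl fun j _ => this j, Finset.sum_add_distrib,
        Finset.sum_ite_eq (Finset.univ : Finset (Fin M)) i (fun j => σ * βo j)]
      simp
    rw [hsum]
    have hciuo : c i uo = k qo (φ i) - ℓ (φ i) := by
      have h4i := h4 (φ i)
      have := hφ i uo
      linarith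
    have hsi : s i = -ℓ (φ i) := by
      rw [hs i]
      have := hφ i u
      rw [hu (φ i)] at this
      linarith
    have h5i := h5 i
    rw [hciuo] at h5i
    rw [hsi]; linarith
  · refine sub_eq_zero.mp (ha₁ _ fun v => ?_)
    rw [LinearMap.map_sub, LinearMap.sub_apply, huBar v]
    have h4v := h4 v
    rw [hkq v] at h4v
    linarith
end
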